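/- For r ≥ 3 and A = e^{2πi/4r}, the full Gauss sum satisfies |Σ_{i=0}^{r−2} Δ(i)² A^{i²+2i}|² = N, where N = Σ_{i=0}^{r−2} Δ(i)² = r/(2sin²(π/r)). Equivalently, the constant κ = (Σ_i Δ(i)² A^{i²+2i})/√N has modulus 1. -/

import Mathlib

open Complex Finset

theorem full_gauss_sum (r : ℕ) (hr : 3 ≤ r)
    (A : ℂ) (hA : A = Complex.exp (2 * Real.pi * Complex.I / (4 * r)))
    (q : ℂ) (hq : q = A ^ 2)
    (Δ : ℕ → ℂ)
    (hΔ : ∀ i, Δ i = (-1 : ℂ) ^ i * (q ^ ((i : ℤ) + 1) - q ^ (-(i : ℤ) - 1)) / (q - q⁻¹)) :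
    ((‖∑ i ∈ Finset.range (r - 1), (Δ i) ^ 2 * A ^ (i ^ 2 + 2 * i)‖ : ℝ) : ℂ) ^ 2
        = ∑ i ∈ Finset.range (r - 1), (Δ i) ^ 2 ∧
    (∑ i ∈ Finset.range (r - 1), (Δ i) ^ 2)
        = ((r : ℂ) / (2 * (Real.sin (Real.pi / r) : ℂ) ^ 2)) ∧
    ‖(∑ i ∈ Finset.range (r - 1), (Δ i) ^ 2 * A ^ (i ^ 2 + 2 * i))
        / (Real.sqrt ((r : ℝ) / (2 * Real.sin (Real.pi / r) ^ 2)) : ℂ)‖ = 1 := by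
  have hr0 : 0 < r := by omega
  have hrR1 : (1:ℝ) < r := by exact_mod_cast (by omega : 1 < r)
  have hrne : (r:ℂ) ≠ 0 := Nat.cast_ne_zero.2 (by omega)
  set s : ℝ := Real.sin (Real.pi / r) with hs_def
  have hspos : 0 < s := Real.sin_pos_of_pos_of_lt_pi (by positivity)
    (div_lt_self Real.pi_pos hrR1)
  have hsC : (s:ℂ) ≠ 0 := by exact_mod_cast hspos.ne'
  set S : ℂ := ∑ i ∈ Finset.range (r - 1), (Δ i) ^ 2 * A ^ (i ^ 2 + 2 * i) with hS_def
  -- basic facts about A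
  have hA0 : A ≠ 0 := by rw [hA]; exact Complex.exp_ne_zero _
  have hAz : ∀ m : ℤ, A ^ m = Complex.exp (m * (2 * Real.pi * Complex.I / (4 * r))) := by
    intro m; rw [hA]; exact (Complex.exp_int_mul _ m).symm
  have hroot : ∀ m : ℤ, A ^ m = 1 ↔ (4 * (r:ℤ)) ∣ m := by
    intro m
    rw [hAz, Complex.exp_eq_one_iff]
    constructor
    · rintro ⟨n, hn⟩
      refine ⟨n, ?_⟩
      have hpi : (2 * (Real.pi:ℂ) * Complex.I) ≠ 0 := by
        simp [Real.pi_ne_zero, Complex.I_ne_zero]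
      have h2 : (m:ℂ) * (2 * Real.pi * Complex.I)
          = ((4*(r:ℤ)*n : ℤ):ℂ) * (2 * Real.pi * Complex.I) := by
        push_cast
        field_simp at hn
        linear_combination (2 * Real.pi * Complex.I) * hn
      have hm : (m:ℂ) = ((4*(r:ℤ)*n : ℤ):ℂ) := mul_right_cancel₀ hpi h2
      exact_mod_cast hm
    · rintro ⟨n, hn⟩
      refine ⟨n, ?_⟩
      rw [hn]
      push_cast
      field_simp
  have key : ∀ a b : ℤ, (4 * (r:ℤ)) ∣ (a - b) → A ^ a = A ^ b := by
    rintro a b ⟨t, ht⟩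
    have ha : a = b + 4*(r:ℤ)*t := by linarith
    rw [ha, zpow_add₀ hA0, zpow_mul, (hroot (4*(r:ℤ))).2 ⟨1, by ring⟩, one_zpow, mul_one]
  have conjA : (starRingEnd ℂ) A = A⁻¹ := by
    rw [hA, ← Complex.exp_conj, ← Complex.exp_neg]
    congr 1
    simp [map_div₀, Complex.conj_I, map_ofNat]
    ring
  -- D and its trig value
  have hA2exp : A ^ (2:ℤ) = Complex.exp ((Real.pi / r : ℝ) * Complex.I) := by
    rw [hAz 2]
    congr 1
    push_cast
    field_simp
    ring
  set D : ℂ := A ^ (2:ℤ) - A ^ (-2:ℤ) with hD_def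
  have hD : D = 2 * (s:ℂ) * Complex.I := by
    have e1 : A ^ (-2:ℤ) = Complex.exp ((-(Real.pi / r) : ℝ) * Complex.I) := by
      rw [zpow_neg, hA2exp, ← Complex.exp_neg]
      congr 1
      push_cast
      ring
    rw [hD_def, hA2exp, e1, Complex.exp_mul_I, Complex.exp_mul_I, Complex.ofReal_neg,
      Complex.cos_neg, Complex.sin_neg, ← Complex.ofReal_sin]
    ring
  have hD0 : D ≠ 0 := by
    rw [hD]
    exact mul_ne_zero (mul_ne_zero two_ne_zero hsC) Complex.I_ne_zero
  have hDsq : D^2 = -4*(s:ℂ)^2 := by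
    rw [hD]
    linear_combination (4*(s:ℂ)^2) * Complex.I_sq
  have habsD : ‖D‖ = 2*s := by
    rw [hD, norm_mul, norm_mul, Complex.norm_I, Complex.norm_two, Complex.norm_real, Real.norm_eq_abs,
      abs_of_pos hspos, mul_one]
  -- q facts and Δ squared
  have hq2 : q = A^(2:ℤ) := by rw [hq, ← zpow_natCast]; norm_num
  have hqD : q - q⁻¹ = D := by rw [hq2, hD_def, zpow_neg]
  have hqm : ∀ m : ℤ, q ^ m = A ^ (2*m) := fun m => by rw [hq2, ← zpow_mul]
  have hΔ2 : ∀ i : ℕ, (Δ i)^2 * D^2 = (A^(2*(i:ℤ)+2) - A^(-2*(i:ℤ)-2))^2 := by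
    intro i
    rw [hΔ i, hqD, div_pow, div_mul_cancel₀ _ (pow_ne_zero 2 hD0), mul_pow,
      pow_right_comm, neg_one_sq, one_pow, one_mul, hqm, hqm,
      show 2*((i:ℤ)+1) = 2*(i:ℤ)+2 by ring, show 2*(-(i:ℤ)-1) = -2*(i:ℤ)-2 by ring]
  -- non-roots
  have hnd : ∀ m : ℤ, 0 < m → m < 4*r → A^m ≠ 1 := by
    intro m h1 h2
    rw [Ne, hroot]
    intro hd
    have := Int.le_of_dvd h1 hd
    omega
  have hu1 : A^(4:ℤ) ≠ 1 := hnd 4 (by norm_num) (by omega)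
  have hv1 : A^(-4:ℤ) ≠ 1 := by
    rw [Ne, hroot]
    intro hd
    have h4 : (4*(r:ℤ)) ∣ 4 := (dvd_neg).1 hd
    have := Int.le_of_dvd (by norm_num) h4
    omega
  have hu_r : (A^(4:ℤ))^r = 1 := by
    rw [← zpow_natCast, ← zpow_mul]
    exact (hroot _).2 ⟨1, by push_cast; ring⟩
  have hv_r : (A^(-4:ℤ))^r = 1 := by
    rw [← zpow_natCast, ← zpow_mul]
    exact (hroot _).2 ⟨-1, by push_cast; ring⟩
  have hgeo : ∀ z : ℂ, z ≠ 1 → z ^ r = 1 → ∑ i ∈ range (r-1), z^(i+1) = -1 := by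
    intro z h1 hzr
    have h0 : ∑ i ∈ range r, z^i = 0 := by rw [geom_sum_eq h1, hzr, sub_self, zero_div]
    have hr1 : r - 1 + 1 = r := by omega
    rw [← hr1, Finset.sum_range_succ', pow_zero] at h0
    linear_combination h0
  -- N computation
  have termN : ∀ i : ℕ, (Δ i)^2 * D^2 = (A^(4:ℤ))^(i+1) + (A^(-4:ℤ))^(i+1) - 2 := by
    intro i
    rw [hΔ2 i]
    have e1 : A^(2*(i:ℤ)+2) * A^(2*(i:ℤ)+2) = (A^(4:ℤ))^(i+1) := by
      rw [← zpow_add₀ hA0, ← zpow_natCast (A^(4:ℤ)), ← zpow_mul]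
      congr 1
      push_cast
      ring
    have e2 : A^(-2*(i:ℤ)-2) * A^(-2*(i:ℤ)-2) = (A^(-4:ℤ))^(i+1) := by
      rw [← zpow_add₀ hA0, ← zpow_natCast (A^(-4:ℤ)), ← zpow_mul]
      congr 1
      push_cast
      ring
    have e3 : A^(2*(i:ℤ)+2) * A^(-2*(i:ℤ)-2) = 1 := by
      rw [← zpow_add₀ hA0, show (2*(i:ℤ)+2) + (-2*(i:ℤ)-2) = 0 by ring, zpow_zero]
    calc (A^(2*(i:ℤ)+2) - A^(-2*(i:ℤ)-2))^2
        = A^(2*(i:ℤ)+2)*A^(2*(i:ℤ)+2) - 2*(A^(2*(i:ℤ)+2)*A^(-2*(i:ℤ)-2))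
            + A^(-2*(i:ℤ)-2)*A^(-2*(i:ℤ)-2) := by ring
      _ = (A^(4:ℤ))^(i+1) + (A^(-4:ℤ))^(i+1) - 2 := by rw [e1, e2, e3]; ring
  have hND : (∑ i ∈ range (r-1), (Δ i)^2) * D^2 = -2*r := by
    calc (∑ i ∈ range (r-1), (Δ i)^2) * D^2
        = ∑ i ∈ range (r-1), ((A^(4:ℤ))^(i+1) + (A^(-4:ℤ))^(i+1) - 2) := by
          rw [Finset.sum_mul]
          exact Finset.sum_congr rfl fun i _ => termN i
      _ = (∑ i ∈ range (r-1), (A^(4:ℤ))^(i+1)) + (∑ i ∈ range (r-1), (A^(-4:ℤ))^(i+1))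
            - ((r-1 : ℕ) : ℂ) * 2 := by
          rw [Finset.sum_sub_distrib, Finset.sum_add_distrib, Finset.sum_const,
            Finset.card_range, nsmul_eq_mul]
      _ = -1 + -1 - ((r-1:ℕ):ℂ)*2 := by rw [hgeo _ hu1 hu_r, hgeo _ hv1 hv_r]
      _ = -2*r := by
          push_cast [Nat.cast_sub (by omega : 1 ≤ r)]
          ring
  have hN : (∑ i ∈ range (r-1), (Δ i)^2) = (r:ℂ) / (2*(s:ℂ)^2) := by
    rw [hDsq] at hND
    rw [eq_div_iff (by simp [hsC] : (2*(s:ℂ)^2) ≠ 0)]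
    linear_combination (-1/2 : ℂ) * hND
  -- Fin (2r) machinery
  haveI : NeZero (2*r) := ⟨by omega⟩
  have hsqc : ∀ a b : ℤ, (2*(r:ℤ)) ∣ (a - b) → ∀ c : ℤ, A ^ (a^2 - c) = A ^ (b^2 - c) := by
    rintro a b ⟨t, ht⟩ c
    apply key
    have ha : a = b + 2*(r:ℤ)*t := by linarith
    exact ⟨t*b + r*t^2, by rw [ha]; ring⟩
  have hsq2 : ∀ a b : ℤ, (2*(r:ℤ)) ∣ (a - b) → A ^ (a^2) = A ^ (b^2) := by
    intro a b h
    have := hsqc a b h 0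
    simpa using this
  have hval : ∀ x y : Fin (2*r), (((x + y : Fin (2*r)).val :ℤ)) - ((x.val:ℤ) + y.val)
      = -((2*r) * (((x.val:ℕ) + y.val)/(2*r) : ℕ)) := by
    intro x y
    rw [Fin.val_add]
    push_cast [Int.emod_def]
    ring
  have hdvd_add : ∀ x y : Fin (2*r), (2*(r:ℤ)) ∣ (((x.val:ℤ) + y.val) - ((x + y : Fin (2*r)).val :ℤ)) := by
    intro x y
    exact ⟨(((x.val:ℕ) + y.val)/(2*r) : ℕ), by
      have := hval x y
      push_cast at this ⊢
      linear_combination -this⟩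
  -- the Gauss sum G
  set G : ℂ := ∑ k ∈ range (2*r), A ^ ((k:ℤ)^2) with hG_def
  have hGfin : G = ∑ x : Fin (2*r), A ^ ((x.val:ℤ)^2) :=
    (Fin.sum_univ_eq_sum_range (fun k => A ^ ((k:ℤ)^2)) (2*r)).symm
  open Fin.NatCast in
  have hshift : ∀ c : ℕ, ∑ k ∈ range (2*r), A ^ (((k:ℤ) + (c:ℤ))^2) = G := by
    intro c
    rw [hGfin, ← Fin.sum_univ_eq_sum_range (fun k => A ^ (((k:ℤ)+(c:ℤ))^2)) (2*r),
      ← Equiv.sum_comp (Equiv.addRight ((c:ℕ) : Fin (2*r))) (fun x : Fin (2*r) => A ^ ((x.val:ℤ)^2))]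
    refine Finset.sum_congr rfl fun x _ => ?_
    have e1 : ((Equiv.addRight ((c:ℕ) : Fin (2*r))) x) = x + ((c:ℕ) : Fin (2*r)) := rfl
    rw [e1]
    apply hsq2
    have h1 := hdvd_add x ((c:ℕ) : Fin (2*r))
    have h2 : ((((c:ℕ) : Fin (2*r))).val : ℤ) = (c:ℤ) - (2*(r:ℤ)) * ((c / (2*r) : ℕ)) := by
      rw [Fin.val_natCast]
      push_cast [Int.emod_def]
      ring
    obtain ⟨t, ht⟩ := h1
    refine ⟨t + ((c / (2*r) : ℕ)), ?_⟩
    rw [h2] at ht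
    push_cast at ht ⊢
    linear_combination ht
  have hGG : G * (starRingEnd ℂ) G = (2*(r:ℂ)) := by
    have conjG : (starRingEnd ℂ) G = ∑ k ∈ range (2*r), A ^ (-(k:ℤ)^2) := by
      rw [hG_def, map_sum]
      exact Finset.sum_congr rfl fun k _ => by rw [map_zpow₀, conjA, inv_zpow, ← zpow_neg]
    rw [conjG, hGfin, ← Fin.sum_univ_eq_sum_range (fun k => A ^ (-(k:ℤ)^2)) (2*r),
      Finset.sum_mul_sum]
    have h1 : ∀ x y : Fin (2*r), A ^ ((x.val:ℤ)^2) * A ^ (-(y.val:ℤ)^2)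
        = A ^ ((x.val:ℤ)^2 - (y.val:ℤ)^2) := by
      intro x y
      rw [← zpow_add₀ hA0]
      ring_nf
    simp only [h1]
    rw [Finset.sum_comm]
    have h2 : ∀ y : Fin (2*r), ∑ x : Fin (2*r), A ^ ((x.val:ℤ)^2 - (y.val:ℤ)^2)
        = ∑ x : Fin (2*r), A ^ ((x.val:ℤ)^2) * ((A ^ (2*(x.val:ℤ))) ^ (y.val)) := by
      intro y
      rw [← Equiv.sum_comp (Equiv.addRight y) (fun x : Fin (2*r) => A ^ ((x.val:ℤ)^2 - (y.val:ℤ)^2))]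
      refine Finset.sum_congr rfl fun x _ => ?_
      have e1 : ((Equiv.addRight y) x) = x + y := rfl
      rw [e1, hsqc (((x + y : Fin (2*r)).val :ℤ)) ((x.val:ℤ) + y.val)
        (by
          obtain ⟨t, ht⟩ := hdvd_add x y
          exact ⟨-t, by linarith⟩) ((y.val:ℤ)^2)]
      have e2 : ((x.val:ℤ) + y.val)^2 - (y.val:ℤ)^2 = (x.val:ℤ)^2 + (2*(x.val:ℤ)) * (y.val:ℤ) := by
        ring
      rw [e2, zpow_add₀ hA0, zpow_mul, zpow_natCast]
    simp only [h2]
    have h3 : ∀ x : Fin (2*r), ∑ y : Fin (2*r), ((A ^ (2*(x.val:ℤ))) ^ (y.val))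
        = if x = 0 then ((2*r:ℕ):ℂ) else 0 := by
      intro x
      rw [Fin.sum_univ_eq_sum_range (fun l => (A ^ (2*(x.val:ℤ))) ^ l) (2*r)]
      by_cases hx : x = 0
      · simp [hx]
      · rw [if_neg hx]
        have hxv : 0 < x.val := Nat.pos_of_ne_zero (fun h => hx (Fin.ext (by simp [h])))
        have hxn : x.val < 2*r := x.isLt
        have hw1 : A ^ (2*(x.val:ℤ)) ≠ 1 := by
          rw [Ne, hroot]
          intro hdvd
          have hle : (4*(r:ℤ)) ≤ 2*x.val := Int.le_of_dvd (by omega) hdvd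
          omega
        have hwn : (A ^ (2*(x.val:ℤ))) ^ (2*r) = 1 := by
          rw [← zpow_natCast, ← zpow_mul]
          exact (hroot _).2 ⟨x.val, by push_cast; ring⟩
        rw [geom_sum_eq hw1, hwn, sub_self, zero_div]
    calc ∑ y : Fin (2*r), ∑ x : Fin (2*r), A ^ ((x.val:ℤ)^2) * ((A ^ (2*(x.val:ℤ))) ^ (y.val))
        = ∑ x : Fin (2*r), A ^ ((x.val:ℤ)^2) * (∑ y : Fin (2*r), ((A ^ (2*(x.val:ℤ))) ^ (y.val))) := by
          rw [Finset.sum_comm]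
          exact Finset.sum_congr rfl fun x _ => by rw [Finset.mul_sum]
      _ = ∑ x : Fin (2*r), if x = 0 then A ^ ((x.val:ℤ)^2) * ((2*r:ℕ):ℂ) else 0 := by
          refine Finset.sum_congr rfl fun x _ => ?_
          rw [h3]
          by_cases hx : x = 0 <;> simp [hx]
      _ = A ^ (((0:Fin (2*r)).val:ℤ)^2) * ((2*r:ℕ):ℂ) :=
          Fintype.sum_ite_eq' (0 : Fin (2*r)) (fun x => A ^ ((x.val:ℤ)^2) * ((2*r:ℕ):ℂ))
      _ = (2*(r:ℂ)) := by
          simp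
  -- the summand function F
  set F : ℕ → ℂ := fun k => A ^ ((k:ℤ)^2 + 4*(k:ℤ) - 1) - 2 * A ^ ((k:ℤ)^2 - 1)
      + A ^ ((k:ℤ)^2 - 4*(k:ℤ) - 1) with hF
  have termS : ∀ i : ℕ, ((Δ i)^2 * A ^ (i^2 + 2*i)) * D^2 = F (i+1) := by
    intro i
    have hAe : A ^ (i^2 + 2*i) = A ^ ((i:ℤ)^2 + 2*(i:ℤ)) := by
      rw [show ((i:ℤ)^2 + 2*(i:ℤ)) = ((i^2 + 2*i : ℕ) : ℤ) by push_cast; ring, zpow_natCast]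
    have ci : ((i+1:ℕ):ℤ) = (i:ℤ)+1 := by push_cast; ring
    have g1 : A^(2*(i:ℤ)+2) * A^(2*(i:ℤ)+2) * A^((i:ℤ)^2+2*(i:ℤ))
        = A ^ (((i:ℤ)+1)^2 + 4*((i:ℤ)+1) - 1) := by
      rw [← zpow_add₀ hA0, ← zpow_add₀ hA0]
      congr 1
      ring
    have g2 : A^(2*(i:ℤ)+2) * A^(-2*(i:ℤ)-2) * A^((i:ℤ)^2+2*(i:ℤ))
        = A ^ (((i:ℤ)+1)^2 - 1) := by
      rw [← zpow_add₀ hA0, ← zpow_add₀ hA0]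
      congr 1
      ring
    have g3 : A^(-2*(i:ℤ)-2) * A^(-2*(i:ℤ)-2) * A^((i:ℤ)^2+2*(i:ℤ))
        = A ^ (((i:ℤ)+1)^2 - 4*((i:ℤ)+1) - 1) := by
      rw [← zpow_add₀ hA0, ← zpow_add₀ hA0]
      congr 1
      ring
    simp only [hF, ci]
    rw [mul_right_comm, hΔ2 i, hAe]
    rw [show ∀ a b c : ℂ, (a-b)^2*c = a*a*c - 2*(a*b*c) + b*b*c from fun a b c => by ring]
    rw [g1, g2, g3]
  have hSD2 : S * D^2 = ∑ i ∈ range (r-1), F (i+1) := by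
    rw [hS_def, Finset.sum_mul]
    exact Finset.sum_congr rfl fun i _ => termS i
  have hF0 : F 0 = 0 := by
    simp only [hF, Nat.cast_zero]
    norm_num
    ring
  have hFr : F r = 0 := by
    simp only [hF]
    rw [key ((r:ℤ)^2 + 4*(r:ℤ) - 1) ((r:ℤ)^2 - 1) ⟨1, by ring⟩,
        key ((r:ℤ)^2 - 4*(r:ℤ) - 1) ((r:ℤ)^2 - 1) ⟨-1, by ring⟩]
    ring
  have hFrefl : ∀ j : ℕ, j < r - 1 → F (2*r - 1 - j) = F (j+1) := by
    intro j hj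
    have hcast : ((2*r - 1 - j : ℕ) : ℤ) = 2*(r:ℤ) - ((j:ℤ)+1) := by
      have h' : (2*r - 1 - j : ℕ) = 2*r - (j+1) := by omega
      rw [h', Nat.cast_sub (by omega : j+1 ≤ 2*r)]
      push_cast
      ring
    have ci : ((j+1:ℕ):ℤ) = (j:ℤ)+1 := by push_cast; ring
    simp only [hF, hcast, ci]
    rw [key ((2*(r:ℤ)-((j:ℤ)+1))^2 + 4*(2*(r:ℤ)-((j:ℤ)+1)) - 1) (((j:ℤ)+1)^2 - 4*((j:ℤ)+1) - 1)
          ⟨(r:ℤ) - ((j:ℤ)+1) + 2, by ring⟩,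
        key ((2*(r:ℤ)-((j:ℤ)+1))^2 - 1) (((j:ℤ)+1)^2 - 1) ⟨(r:ℤ) - ((j:ℤ)+1), by ring⟩,
        key ((2*(r:ℤ)-((j:ℤ)+1))^2 - 4*(2*(r:ℤ)-((j:ℤ)+1)) - 1) (((j:ℤ)+1)^2 + 4*((j:ℤ)+1) - 1)
          ⟨(r:ℤ) - ((j:ℤ)+1) - 2, by ring⟩]
    ring
  have hsplit : ∑ k ∈ range (2*r), F k = 2 * ∑ i ∈ range (r-1), F (i+1) := by
    have h2r : 2*r = r + r := by ring
    rw [h2r, Finset.sum_range_add]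
    have hra : r = (r-1) + 1 := by omega
    have hra' : r - 1 + 1 = r := by omega
    have e1 : ∑ i ∈ range r, F i = ∑ i ∈ range (r-1), F (i+1) + F 0 := by
      have h := Finset.sum_range_succ' F (r-1)
      rwa [hra'] at h
    have e2 : ∑ i ∈ range r, F (r + i) = ∑ i ∈ range (r-1), F (r + (i+1)) + F (r + 0) := by
      have h := Finset.sum_range_succ' (fun i => F (r+i)) (r-1)
      rwa [hra'] at h
    have e3 : ∑ i ∈ range (r-1), F (r + (i+1)) = ∑ i ∈ range (r-1), F (i+1) := by
      rw [← Finset.sum_range_reflect (fun i => F (r + (i+1))) (r-1)]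
      refine Finset.sum_congr rfl fun j hj => ?_
      have hj' : j < r - 1 := Finset.mem_range.1 hj
      have h'' : r + (r - 1 - 1 - j + 1) = 2*r - 1 - j := by omega
      rw [h'', hFrefl j hj']
    rw [e1, e2, e3, Nat.add_zero, hF0, hFr]
    ring
  have halg : ∑ k ∈ range (2*r), F k = 2*(A^(-5:ℤ))*G - 2*(A^(-1:ℤ))*G := by
    have t1 : ∀ k:ℕ, A ^ ((k:ℤ)^2 + 4*(k:ℤ) - 1) = A^(-5:ℤ) * A^(((k:ℤ) + ((2:ℕ):ℤ))^2) := by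
      intro k
      rw [← zpow_add₀ hA0]
      congr 1
      push_cast
      ring
    have t2 : ∀ k:ℕ, A ^ ((k:ℤ)^2 - 1) = A^(-1:ℤ) * A^((k:ℤ)^2) := by
      intro k
      rw [← zpow_add₀ hA0]
      congr 1
      try ring
    have t3 : ∀ k:ℕ, A ^ ((k:ℤ)^2 - 4*(k:ℤ) - 1)
        = A^(-5:ℤ) * A^(((k:ℤ) + ((2*r-2:ℕ):ℤ))^2) := by
      intro k
      rw [← zpow_add₀ hA0]
      apply key
      refine ⟨-(k:ℤ) - (r:ℤ) + 2, ?_⟩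
      rw [Nat.cast_sub (by omega : 2 ≤ 2*r)]
      push_cast
      ring
    calc ∑ k ∈ range (2*r), F k
        = ∑ k ∈ range (2*r), (A^(-5:ℤ) * A^(((k:ℤ)+((2:ℕ):ℤ))^2)
            - 2*(A^(-1:ℤ) * A^((k:ℤ)^2)) + A^(-5:ℤ) * A^(((k:ℤ)+((2*r-2:ℕ):ℤ))^2)) := by
          refine Finset.sum_congr rfl fun k _ => ?_
          simp only [hF]
          rw [t1 k, t2 k, t3 k]
      _ = A^(-5:ℤ) * (∑ k ∈ range (2*r), A^(((k:ℤ)+((2:ℕ):ℤ))^2))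
            - 2*(A^(-1:ℤ) * ∑ k ∈ range (2*r), A^((k:ℤ)^2))
            + A^(-5:ℤ) * (∑ k ∈ range (2*r), A^(((k:ℤ)+((2*r-2:ℕ):ℤ))^2)) := by
          simp only [Finset.sum_add_distrib, Finset.sum_sub_distrib, ← Finset.mul_sum]
      _ = A^(-5:ℤ) * G - 2*(A^(-1:ℤ)*G) + A^(-5:ℤ)*G := by rw [hshift 2, hshift (2*r-2), ← hG_def]
      _ = 2*(A^(-5:ℤ))*G - 2*(A^(-1:ℤ))*G := by ring
  have hSDval : S * D^2 = A^(-5:ℤ)*G - A^(-1:ℤ)*G := by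
    have hh := hsplit.symm.trans halg
    rw [hSD2]
    linear_combination hh / 2
  have hSD : S * D = -(A^(-3:ℤ)) * G := by
    have u1 : A^(-3:ℤ) * A^(2:ℤ) = A^(-1:ℤ) := by
      rw [← zpow_add₀ hA0]
      norm_num
    have u2 : A^(-3:ℤ) * A^(-2:ℤ) = A^(-5:ℤ) := by
      rw [← zpow_add₀ hA0]
      norm_num
    have hfac : -(A^(-3:ℤ)) * D = A^(-5:ℤ) - A^(-1:ℤ) := by
      rw [hD_def, neg_mul, mul_sub, u1, u2]
      ring
    apply mul_right_cancel₀ hD0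
    calc S * D * D = S * D^2 := by ring
      _ = A^(-5:ℤ)*G - A^(-1:ℤ)*G := hSDval
      _ = (-(A^(-3:ℤ)) * D) * G := by rw [hfac]; ring
      _ = -(A^(-3:ℤ)) * G * D := by ring
  -- absolute values
  have habsA : ‖A‖ = 1 := by
    have hA' : A = Complex.exp ((Real.pi/(2*r) : ℝ) * Complex.I) := by
      rw [hA]
      congr 1
      push_cast
      field_simp
      ring
    rw [hA']
    exact Complex.norm_exp_ofReal_mul_I _
  have habsG : ‖G‖^2 = 2*r := by
    have h2 : ((Complex.normSq G : ℝ) : ℂ) = ((2*(r:ℝ) : ℝ):ℂ) := by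
      rw [← Complex.mul_conj, hGG]
      push_cast
      ring
    have h3 : Complex.normSq G = 2*(r:ℝ) := by exact_mod_cast h2
    rw [Complex.sq_norm, h3]
  have habsS : ‖S‖ * (2*s) = ‖G‖ := by
    calc ‖S‖ * (2*s) = ‖S‖ * ‖D‖ := by rw [habsD]
      _ = ‖S * D‖ := (norm_mul S D).symm
      _ = ‖-(A^(-3:ℤ)) * G‖ := by rw [hSD]
      _ = ‖A^(-3:ℤ)‖ * ‖G‖ := by
          rw [norm_mul, norm_neg]
      _ = ‖G‖ := by rw [norm_zpow, habsA, one_zpow, one_mul]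
  have habsSsq : (‖S‖)^2 = (r:ℝ)/(2*s^2) := by
    have h2 : ((‖S‖)*(2*s))^2 = 2*r := by rw [habsS]; exact habsG
    rw [eq_div_iff (by positivity : (2*(s:ℝ)^2) ≠ 0)]
    linear_combination h2 / 2
  refine ⟨?_, hN, ?_⟩
  · rw [hN, show ((‖S‖ :ℝ):ℂ)^2 = (((‖S‖)^2 : ℝ):ℂ) by push_cast; ring,
      habsSsq]
    push_cast
    ring
  · have hx : (0:ℝ) < (r:ℝ)/(2*s^2) := div_pos (by exact_mod_cast hr0) (by positivity)
    rw [norm_div, Complex.norm_real, Real.norm_eq_abs, _root_.abs_of_nonneg (Real.sqrt_nonneg _)]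
    have hSval : ‖S‖ = Real.sqrt ((r:ℝ)/(2*s^2)) := by
      rw [← Real.sqrt_sq (norm_nonneg S), habsSsq]
    rw [hSval, div_self (Real.sqrt_ne_zero'.2 hx)]
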